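/- Let Ω ⊂ ℝⁿ be an open set with finite positive measure and let U ⊂ Ω with |U| > 0. If |Ω \ U|/|Ω| ≤ α(Ω)/4, then α(U) ≥ α(Ω)/2. -/

import Mathlib

open MeasureTheory Metric Set Filter
open scoped ENNReal NNReal Topology

noncomputable section

/-- Euclidean space `ℝⁿ`. -/
abbrev Eucl (n : ℕ) := EuclideanSpace ℝ (Fin n)

/-- `ω_n`, the Lebesgue measure of the unit ball of `ℝⁿ`. -/
def ballVol (n : ℕ) : ℝ := (volume (ball (0 : Eucl n) 1)).toReal

/-- The Fraenkel asymmetry of a set `Ω ⊆ ℝⁿ`: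
`α(Ω) = inf { |Ω Δ B_r(x)| / |B_r(x)| : |B_r(x)| = |Ω| }`. -/
def asym {n : ℕ} (Ω : Set (Eucl n)) : ℝ :=
  sInf {a : ℝ | ∃ (x : Eucl n) (r : ℝ), 0 < r ∧
    volume (ball x r) = volume Ω ∧
    a = (volume (symmDiff Ω (ball x r))).toReal / (volume (ball x r)).toReal}

/-- The distribution function `μ(t) = |{x ∈ Ω : |u x| > t}|` of `u` on `Ω`. -/
def distFun {n : ℕ} (Ω : Set (Eucl n)) (u : Eucl n → ℝ) (t : ℝ) : ℝ :=
  (volume {x ∈ Ω | t < |u x|}).toReal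

/-- The decreasing rearrangement `u*(s) = inf {t ≥ 0 : μ(t) < s}`. -/
def decRear {n : ℕ} (Ω : Set (Eucl n)) (u : Eucl n → ℝ) (s : ℝ) : ℝ :=
  sInf {t : ℝ | 0 ≤ t ∧ distFun Ω u t < s}

/-- The Schwarz rearrangement `u♯(x) = u*(ω_n |x|ⁿ)`. -/
def schwarz {n : ℕ} (Ω : Set (Eucl n)) (u : Eucl n → ℝ) (x : Eucl n) : ℝ :=
  decRear Ω u (ballVol n * ‖x‖ ^ n)

/-- Weak solution of the Robin Poisson problem `-Δu = f` in `Ω`,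
`∂u/∂ν + βu = 0` on `∂Ω`: for every test function `φ`,
`∫_Ω ∇u·∇φ + β ∫_{∂Ω} u φ dH^{n-1} = ∫_Ω f φ`. -/
def IsRobinSol {n : ℕ} (Ω : Set (Eucl n)) (β : ℝ) (f u : Eucl n → ℝ) : Prop :=
  ∀ φ : Eucl n → ℝ, ContDiff ℝ 1 φ →
    (∫ x in Ω, (inner ℝ (gradient u x) (gradient φ x) : ℝ))
      + β * ∫ x in frontier Ω, u x * φ x ∂(μH[(n : ℝ) - 1])
    = ∫ x in Ω, f x * φ x

/-- The Lorentz `L^{k,1}` norm: `‖u‖_{L^{k,1}} = ∫_0^∞ μ(t)^{1/k} dt`. -/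
def lorentzK1 {n : ℕ} (Ω : Set (Eucl n)) (u : Eucl n → ℝ) (k : ℝ) : ℝ :=
  ∫ t in Ioi (0 : ℝ), distFun Ω u t ^ ((1 : ℝ) / k)

/-- The square of the Lorentz `L^{2k,2}` norm:
`‖u‖²_{L^{2k,2}} = 2 ∫_0^∞ t μ(t)^{1/k} dt`. -/
def lorentz2K2sq {n : ℕ} (Ω : Set (Eucl n)) (u : Eucl n → ℝ) (k : ℝ) : ℝ :=
  2 * ∫ t in Ioi (0 : ℝ), t * distFun Ω u t ^ ((1 : ℝ) / k)

/-- The Laplacian `Δu(x) = ∑ᵢ ∂²u/∂xᵢ²`. -/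
def lapl {n : ℕ} (u : Eucl n → ℝ) (x : Eucl n) : ℝ :=
  ∑ i : Fin n, fderiv ℝ (fun y => fderiv ℝ u y (EuclideanSpace.single i 1)) x
    (EuclideanSpace.single i 1)

lemma exists_ball_eq (n : ℕ) (hn : 1 ≤ n) (x : Eucl n) (v : ℝ≥0∞)
    (hv : 0 < v) (hv' : v < ⊤) : ∃ r : ℝ, 0 < r ∧ volume (ball x r) = v := by
  have : Nonempty (Fin n) := ⟨⟨0, hn⟩⟩
  set ω : ℝ≥0∞ := volume (ball (0 : Eucl n) 1) with hω
  have hω0 : 0 < ω := measure_ball_pos _ _ one_pos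
  have hωt : ω < ⊤ := measure_ball_lt_top
  set r : ℝ := (v.toReal / ω.toReal) ^ ((1 : ℝ) / n) with hrdef
  have hvt : 0 < v.toReal := ENNReal.toReal_pos hv.ne' hv'.ne
  have hωtR : 0 < ω.toReal := ENNReal.toReal_pos hω0.ne' hωt.ne
  have hbase : 0 < v.toReal / ω.toReal := div_pos hvt hωtR
  have hr : 0 < r := Real.rpow_pos_of_pos hbase _
  refine ⟨r, hr, ?_⟩
  rw [Measure.addHaar_ball volume x hr.le, finrank_euclideanSpace_fin, ← hω]
  have hrn : r ^ n = v.toReal / ω.toReal := by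
    rw [hrdef, ← Real.rpow_natCast (((v.toReal / ω.toReal)) ^ ((1:ℝ)/n)) n,
      ← Real.rpow_mul hbase.le]
    have hn0 : (n : ℝ) ≠ 0 := by positivity
    rw [one_div, inv_mul_cancel₀ hn0, Real.rpow_one]
  rw [hrn, ENNReal.ofReal_div_of_pos hωtR, ENNReal.ofReal_toReal hv'.ne,
    ENNReal.ofReal_toReal hωt.ne, ENNReal.div_mul_cancel hω0.ne' hωt.ne]

lemma radius_mono (n : ℕ) (hn : 1 ≤ n) (x : Eucl n) {r r' : ℝ}
    (hr : 0 < r) (hr' : 0 < r')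
    (h : volume (ball x r) ≤ volume (ball x r')) : r ≤ r' := by
  have : Nonempty (Fin n) := ⟨⟨0, hn⟩⟩
  by_contra hc
  push_neg at hc
  have hω0 : (0:ℝ≥0∞) < volume (ball (0 : Eucl n) 1) := measure_ball_pos _ _ one_pos
  have hωt : volume (ball (0 : Eucl n) 1) < ⊤ := measure_ball_lt_top
  have hlt : volume (ball x r') < volume (ball x r) := by
    rw [Measure.addHaar_ball volume x hr.le, Measure.addHaar_ball volume x hr'.le,
      finrank_euclideanSpace_fin]
    refine ENNReal.mul_lt_mul_left hω0.ne' hωt.ne ?_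
    exact ENNReal.ofReal_lt_ofReal_iff (by positivity) |>.mpr
      (pow_lt_pow_left₀ hc hr'.le (by omega))
  exact absurd h hlt.not_ge


/-- Propagation of asymmetry: if `Ω` is open with finite positive measure,
`U ⊆ Ω` has positive measure and `|Ω \ U|/|Ω| ≤ α(Ω)/4`, then `α(U) ≥ α(Ω)/2`. -/
theorem asym_propagation (n : ℕ) (hn : 1 ≤ n) (Ω U : Set (Eucl n))
    (hΩo : IsOpen Ω) (hfin : volume Ω < ⊤) (hU : MeasurableSet U)
    (hUΩ : U ⊆ Ω) (hUpos : 0 < volume U)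
    (hcond : (volume (Ω \ U)).toReal / (volume Ω).toReal ≤ asym Ω / 4) :
    asym Ω / 2 ≤ asym U := by
  have hUle : volume U ≤ volume Ω := measure_mono hUΩ
  have hUfin : volume U < ⊤ := lt_of_le_of_lt hUle hfin
  have hΩpos : 0 < volume Ω := lt_of_lt_of_le hUpos hUle
  set vΩ : ℝ := (volume Ω).toReal with hvΩdef
  set vU : ℝ := (volume U).toReal with hvUdef
  have hvΩ : 0 < vΩ := ENNReal.toReal_pos hΩpos.ne' hfin.ne
  have hvU : 0 < vU := ENNReal.toReal_pos hUpos.ne' hUfin.ne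
  have hvUΩ : vU ≤ vΩ := ENNReal.toReal_mono hfin.ne hUle
  -- bounded below by 0
  have hbdd : ∀ (V : Set (Eucl n)), BddBelow {a : ℝ | ∃ (x : Eucl n) (r : ℝ), 0 < r ∧
      volume (ball x r) = volume V ∧
      a = (volume (symmDiff V (ball x r))).toReal / (volume (ball x r)).toReal} := by
    intro V
    refine ⟨0, fun a ha => ?_⟩
    obtain ⟨x, r, hr, hvol, rfl⟩ := ha
    positivity
  -- asym Ω ≥ 0
  obtain ⟨rΩ, hrΩ, hbΩ⟩ := exists_ball_eq n hn 0 (volume Ω) hΩpos hfin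
  have hA0 : 0 ≤ asym Ω := by
    refine le_csInf ⟨_, 0, rΩ, hrΩ, hbΩ, rfl⟩ ?_
    rintro a ⟨x, r, hr, hvol, rfl⟩
    positivity
  -- from hcond
  have hd : (volume (Ω \ U)).toReal ≤ asym Ω / 4 * vΩ :=
    (div_le_iff₀ hvΩ).mp hcond
  obtain ⟨rU, hrU, hbU⟩ := exists_ball_eq n hn 0 (volume U) hUpos hUfin
  refine le_csInf ⟨_, 0, rU, hrU, hbU, rfl⟩ ?_
  rintro a ⟨x, r, hr, hvol, rfl⟩
  -- construct the big ball around the same center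
  obtain ⟨r', hr', hb'⟩ := exists_ball_eq n hn x (volume Ω) hΩpos hfin
  have hrr' : r ≤ r' := radius_mono n hn x hr hr' (by rw [hvol, hb']; exact hUle)
  have hBB' : ball x r ⊆ ball x r' := ball_subset_ball hrr'
  -- asym Ω ≤ |Ω ∆ B'| / vΩ
  have hA_le : asym Ω ≤ (volume (symmDiff Ω (ball x r'))).toReal / vΩ := by
    have : asym Ω ≤ (volume (symmDiff Ω (ball x r'))).toReal
        / (volume (ball x r')).toReal :=
      csInf_le (hbdd Ω) ⟨x, r', hr', hb', rfl⟩
    rwa [hb'] at this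
  have h1 : asym Ω * vΩ ≤ (volume (symmDiff Ω (ball x r'))).toReal :=
    (le_div_iff₀ hvΩ).mp hA_le
  -- symmetric difference estimates in ℝ≥0∞
  have hΩU : symmDiff Ω U = Ω \ U := by
    rw [symmDiff_comm]; exact symmDiff_of_le hUΩ
  have hBeq : volume (symmDiff (ball x r) (ball x r')) = volume (Ω \ U) := by
    rw [symmDiff_of_le hBB',
      measure_diff hBB' measurableSet_ball.nullMeasurableSet measure_ball_lt_top.ne,
      measure_diff hUΩ hU.nullMeasurableSet hUfin.ne, hvol, hb']
  have h2 : volume (symmDiff Ω (ball x r')) ≤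
      volume (Ω \ U) + volume (symmDiff U (ball x r)) + volume (Ω \ U) := by
    calc volume (symmDiff Ω (ball x r'))
        ≤ volume (symmDiff Ω (ball x r)) + volume (symmDiff (ball x r) (ball x r')) :=
          measure_symmDiff_le _ _ _
      _ ≤ (volume (symmDiff Ω U) + volume (symmDiff U (ball x r)))
            + volume (symmDiff (ball x r) (ball x r')) :=
          add_le_add_left (measure_symmDiff_le _ _ _) _
      _ = volume (Ω \ U) + volume (symmDiff U (ball x r)) + volume (Ω \ U) := by
          rw [hΩU, hBeq]
  have hDfin : volume (Ω \ U) ≠ ⊤ := (lt_of_le_of_lt (measure_mono diff_subset) hfin).ne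
  have hSfin : volume (symmDiff U (ball x r)) ≠ ⊤ := by
    refine ((measure_mono symmDiff_subset_union).trans_lt
      (lt_of_le_of_lt (measure_union_le _ _) ?_)).ne
    rw [hvol]
    exact ENNReal.add_lt_top.mpr ⟨hUfin, hUfin⟩
  have h3 : (volume (symmDiff Ω (ball x r'))).toReal ≤
      (volume (Ω \ U)).toReal + (volume (symmDiff U (ball x r))).toReal
        + (volume (Ω \ U)).toReal := by
    have := ENNReal.toReal_mono (by
      refine ENNReal.add_ne_top.mpr ⟨ENNReal.add_ne_top.mpr ⟨hDfin, hSfin⟩, hDfin⟩) h2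
    rwa [ENNReal.toReal_add (ENNReal.add_ne_top.mpr ⟨hDfin, hSfin⟩) hDfin,
      ENNReal.toReal_add hDfin hSfin] at this
  -- finish with real arithmetic
  rw [hvol, ← hvUdef, le_div_iff₀ hvU]
  have hmul : asym Ω * vU ≤ asym Ω * vΩ := mul_le_mul_of_nonneg_left hvUΩ hA0
  linarith
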